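/- arXiv:1007.4443 — 2 statements merged into one kernel-verified Lean document; each statement's English description precedes it below -/
import Mathlib

section
/- Let d > 0 and a be real numbers, and set b = -1 + 2*d^2*sin(a/2)^2. Then b^2 ≤ 1 holds for all real a if and only if d ≤ 1. -/
theorem stmt_2 (d : ℝ) (hd : 0 < d) :
    (∀ a : ℝ, (-1 + 2 * d ^ 2 * Real.sin (a / 2) ^ 2) ^ 2 ≤ 1) ↔ d ≤ 1 := by
  constructor
  · intro h
    have := h Real.pi
    rw [Real.sin_pi_div_two] at this
    nlinarith [sq_nonneg (d - 1), sq_nonneg (d + 1)]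
  · intro hd1 a
    have hs := Real.sin_sq_le_one (a / 2)
    have hs0 := sq_nonneg (Real.sin (a / 2))
    have ht : d ^ 2 * Real.sin (a / 2) ^ 2 ≤ 1 := by nlinarith
    have ht0 : 0 ≤ d ^ 2 * Real.sin (a / 2) ^ 2 := by positivity
    nlinarith [mul_nonneg ht0 (sub_nonneg.mpr ht)]
end

section
/- Let A be a commutative ring, M ⊆ A^r a submodule, and ≺_pot the position-over-term module ordering induced by a monomial ordering ≺ (comparing first by component index, then by ≺). If G is a Gröbner basis of M with respect to ≺_pot and F_s = A e_1 ⊕ ⋯ ⊕ A e_s is the free submodule of the first s components, then G ∩ F_s is a Gröbner basis of M ∩ F_s. -/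
open MvPolynomial
open scoped Classical

variable {σ k : Type*} [Field k] {r : ℕ}

/-- The set of module monomials (component, exponent vector) occurring in a
vector of polynomials `v ∈ A^r`, `A = k[x_i : i ∈ σ]`. -/
noncomputable def modSupport (v : Fin r → MvPolynomial σ k) :
    Finset (Fin r × (σ →₀ ℕ)) :=
  Finset.univ.biUnion fun i => (v i).support.image fun α => (i, α)

/-- The leading module monomial of `v` with respect to the
position-over-term ordering `≺_pot` induced by the monomial order `mo`:
module monomials are compared first by component, then by `mo`. -/
noncomputable def lmPot (mo : LinearOrder (σ →₀ ℕ)) (v : Fin r → MvPolynomial σ k) :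
    Option (Fin r ×ₗ (σ →₀ ℕ)) :=
  letI := mo
  ((modSupport v).image toLex).max

/-- `G` is a Gröbner basis of the set `S ⊆ A^r` with respect to `≺_pot`:
`G ⊆ S` and for every nonzero `v ∈ S` there is `g ∈ G` whose leading module
monomial has the same component as that of `v` and whose monomial part divides
that of `v`. -/
def IsGroebnerBasisPot (mo : LinearOrder (σ →₀ ℕ))
    (S : Set (Fin r → MvPolynomial σ k)) (G : Finset (Fin r → MvPolynomial σ k)) : Prop :=
  ↑G ⊆ S ∧ ∀ v ∈ S, v ≠ 0 → ∃ g ∈ G, ∃ a b : Fin r × (σ →₀ ℕ),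
    lmPot mo g = some (toLex a) ∧ lmPot mo v = some (toLex b) ∧
    a.1 = b.1 ∧ ∀ i, a.2 i ≤ b.2 i

lemma mem_modSupport_iff (v : Fin r → MvPolynomial σ k) (i : Fin r) (α : σ →₀ ℕ) :
    (i, α) ∈ modSupport v ↔ α ∈ (v i).support := by
  simp only [modSupport, Finset.mem_biUnion, Finset.mem_univ, true_and, Finset.mem_image,
    Prod.mk.injEq]
  constructor
  · rintro ⟨j, β, hβ, rfl, rfl⟩; exact hβ
  · exact fun h => ⟨i, α, h, rfl, rfl⟩

theorem stmt_15 (mo : LinearOrder (σ →₀ ℕ))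
    -- `mo` is a monomial ordering: global and compatible with multiplication
    (hglobal : ∀ α : σ →₀ ℕ, mo.le 0 α)
    (hcompat : ∀ α β γ : σ →₀ ℕ, mo.lt α β → mo.lt (α + γ) (β + γ))
    (M : Submodule (MvPolynomial σ k) (Fin r → MvPolynomial σ k))
    (G : Finset (Fin r → MvPolynomial σ k))
    (hG : IsGroebnerBasisPot mo (M : Set (Fin r → MvPolynomial σ k)) G)
    (s : ℕ) :
    -- `G ∩ F_s` is a Gröbner basis of `M ∩ F_s`, where `F_s = A e_1 ⊕ ⋯ ⊕ A e_s`
    -- is the free submodule of the first `s` components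
    IsGroebnerBasisPot mo
      {v | v ∈ M ∧ ∀ i : Fin r, s ≤ (i : ℕ) → v i = 0}
      (G.filter fun g => ∀ i : Fin r, s ≤ (i : ℕ) → g i = 0) := by

  classical
  letI := mo
  obtain ⟨hGM, hGB⟩ := hG
  constructor
  · intro g hg
    rw [Finset.coe_filter] at hg
    exact ⟨hGM hg.1, hg.2⟩
  · intro v hv hv0
    obtain ⟨g, hgG, a, b, hga, hvb, hab, hdiv⟩ := hGB v hv.1 hv0
    have hvb' : ((modSupport v).image toLex).max = some (toLex b) := hvb
    have hga' : ((modSupport g).image toLex).max = some (toLex a) := hga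
    have hbmem : b ∈ modSupport v := by
      have h := Finset.mem_of_max hvb'
      obtain ⟨x, hx, hxe⟩ := Finset.mem_image.mp h
      rwa [toLex.injective hxe] at hx
    have hbne : v b.1 ≠ 0 := by
      intro h0
      have : (b.1, b.2) ∈ modSupport v := by rwa [Prod.mk.eta]
      rw [mem_modSupport_iff, h0] at this
      simp at this
    have hb1 : (b.1 : ℕ) < s := by
      by_contra h
      exact hbne (hv.2 b.1 (le_of_not_gt h))
    have hgz : ∀ i : Fin r, s ≤ (i : ℕ) → g i = 0 := by
      intro i hi
      by_contra hne
      obtain ⟨α, hα⟩ := (MvPolynomial.support_nonempty.mpr hne)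
      have hmem : toLex (i, α) ∈ (modSupport g).image toLex :=
        Finset.mem_image_of_mem _ ((mem_modSupport_iff g i α).mpr hα)
      have h1 : i ≤ a.1 := by
        rcases (@Prod.Lex.le_iff (Fin r) (σ →₀ ℕ) _ mo.toLE (i, α) a).mp
          (Finset.le_max_of_eq hmem hga') with h | h
        · exact le_of_lt h
        · exact le_of_eq h.1
      have : (i : ℕ) ≤ (b.1 : ℕ) := by
        have := hab ▸ h1
        exact_mod_cast this
      omega
    refine ⟨g, Finset.mem_filter.mpr ⟨hgG, hgz⟩, a, b, hga, hvb, hab, hdiv⟩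
end
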